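/- Every planar simple graph on 5 vertices that contains no subgraph isomorphic to the Theta graph on 5 vertices (a 5-cycle plus a chord) has at most 7 edges. -/

import Mathlib

set_option maxRecDepth 100000
set_option synthInstance.maxSize 2000
set_option synthInstance.maxHeartbeats 1000000
set_option maxHeartbeats 4000000


open SimpleGraph

/-- `G` has a planar embedding (drawing in the plane): vertices are mapped to distinct
points of `ℝ²`, each edge `uv` is drawn as a simple continuous arc from the point of `u`
to the point of `v`, arcs traversed in opposite directions coincide, the interior of an
arc passes through no vertex point, and the interiors of arcs of distinct edges are
disjoint. -/
def SimpleGraph.HasPlanarEmbedding {V : Type*} (G : SimpleGraph V) : Prop :=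
  ∃ (pos : V → ℝ × ℝ) (arc : V → V → ℝ → ℝ × ℝ),
    Function.Injective pos ∧
    (∀ u v : V, G.Adj u v →
      ContinuousOn (arc u v) (Set.Icc (0 : ℝ) 1) ∧
      Set.InjOn (arc u v) (Set.Icc (0 : ℝ) 1) ∧
      arc u v 0 = pos u ∧
      arc u v 1 = pos v ∧
      (∀ t : ℝ, arc u v t = arc v u (1 - t)) ∧
      (∀ w : V, ∀ t ∈ Set.Ioo (0 : ℝ) 1, arc u v t ≠ pos w)) ∧
    (∀ u v x y : V, G.Adj u v → G.Adj x y → s(u, v) ≠ s(x, y) →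
      ∀ t₁ ∈ Set.Ioo (0 : ℝ) 1, ∀ t₂ ∈ Set.Ioo (0 : ℝ) 1, arc u v t₁ ≠ arc x y t₂)

/-- `G` contains a subgraph isomorphic to `F`, i.e. there is an injective graph
homomorphism from `F` to `G`. -/
def ContainsCopy {α β : Type*} (F : SimpleGraph α) (G : SimpleGraph β) : Prop :=
  ∃ f : F →g G, Function.Injective f

/-- The Theta graph on 4 vertices: the 4-cycle 0-1-2-3-0 plus the chord 02,
i.e. `K₄` minus one edge. -/
def theta4 : SimpleGraph (Fin 4) :=
  SimpleGraph.fromEdgeSet {s(0, 1), s(1, 2), s(2, 3), s(0, 3), s(0, 2)}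

/-- The Theta graph on 5 vertices: the 5-cycle 0-1-2-3-4-0 plus the chord 02. -/
def theta5 : SimpleGraph (Fin 5) :=
  SimpleGraph.fromEdgeSet {s(0, 1), s(1, 2), s(2, 3), s(3, 4), s(0, 4), s(0, 2)}

/-- The cycle on 6 vertices: 0-1-2-3-4-5-0. -/
def cycle6 : SimpleGraph (Fin 6) :=
  SimpleGraph.fromEdgeSet {s(0, 1), s(1, 2), s(2, 3), s(3, 4), s(4, 5), s(0, 5)}

/-- `G` contains no member of `Θ₆` as a subgraph: for each pair of distinct
non-consecutive vertices `a`, `b` of the 6-cycle, `G` contains no copy of the Theta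
graph obtained from the 6-cycle by adding the chord `ab`. -/
def Theta6Free {β : Type*} (G : SimpleGraph β) : Prop :=
  ∀ a b : Fin 6, a ≠ b → ¬ cycle6.Adj a b →
    ¬ ContainsCopy (cycle6 ⊔ SimpleGraph.fromEdgeSet {s(a, b)}) G

/-- `K₅⁻`: the complete graph on 5 vertices minus one edge. -/
def K5minus : SimpleGraph (Fin 5) :=
  (⊤ : SimpleGraph (Fin 5)).deleteEdges {s(0, 1)}

abbrev edgeOK (x1 y1 x2 y2 a b : Fin 5) : Prop :=
  a ≠ b ∧ ¬(a = x1 ∧ b = y1) ∧ ¬(a = y1 ∧ b = x1) ∧ ¬(a = x2 ∧ b = y2) ∧ ¬(a = y2 ∧ b = x2)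

lemma key : ∀ x1 y1 x2 y2 : Fin 5, x1 ≤ y1 → x2 ≤ y2 → x1 ≤ x2 → ∃ v0 v1 v2 v3 v4 : Fin 5,
    (v0 ≠ v1 ∧ v0 ≠ v2 ∧ v0 ≠ v3 ∧ v0 ≠ v4 ∧ v1 ≠ v2 ∧ v1 ≠ v3 ∧ v1 ≠ v4 ∧
     v2 ≠ v3 ∧ v2 ≠ v4 ∧ v3 ≠ v4) ∧
    (edgeOK x1 y1 x2 y2 v0 v1 ∧ edgeOK x1 y1 x2 y2 v1 v2 ∧
     edgeOK x1 y1 x2 y2 v2 v3 ∧ edgeOK x1 y1 x2 y2 v3 v4 ∧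
     edgeOK x1 y1 x2 y2 v0 v4 ∧ edgeOK x1 y1 x2 y2 v0 v2) := by decide

lemma sym2_minmax (x y : Fin 5) : s(min x y, max x y) = s(x, y) := by
  rcases le_total x y with h | h
  · rw [min_eq_left h, max_eq_right h]
  · rw [min_eq_right h, max_eq_left h, Sym2.eq_swap]

/-- If every non-edge of G' is one of two given unordered pairs, then G' contains theta5. -/
lemma contains_of_two_nonedges (G' : SimpleGraph (Fin 5)) (x1 y1 x2 y2 : Fin 5)
    (hcov : ∀ a b : Fin 5, a ≠ b → ¬ G'.Adj a b → s(a, b) = s(x1, y1) ∨ s(a, b) = s(x2, y2)) :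
    ContainsCopy theta5 G' := by
  -- normalize the pairs
  have main : ∀ p1 q1 p2 q2 : Fin 5, p1 ≤ q1 → p2 ≤ q2 → p1 ≤ p2 →
      (∀ a b : Fin 5, a ≠ b → ¬ G'.Adj a b → s(a, b) = s(p1, q1) ∨ s(a, b) = s(p2, q2)) →
      ContainsCopy theta5 G' := by
    intro p1 q1 p2 q2 h1 h2 h12 hcov
    obtain ⟨v0, v1, v2, v3, v4, ⟨d01, d02, d03, d04, d12, d13, d14, d23, d24, d34⟩,
      e01, e12, e23, e34, e04, e02⟩ := key p1 q1 p2 q2 h1 h2 h12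
    have adj : ∀ a b : Fin 5, edgeOK p1 q1 p2 q2 a b → G'.Adj a b := by
      rintro a b ⟨hne, A, B, C, D⟩
      by_contra hadj
      rcases hcov a b hne hadj with h | h <;> rw [Sym2.eq_iff] at h <;> tauto
    have h01 := adj _ _ e01
    have h12' := adj _ _ e12
    have h23 := adj _ _ e23
    have h34 := adj _ _ e34
    have h04 := adj _ _ e04
    have h02 := adj _ _ e02
    refine ⟨⟨![v0, v1, v2, v3, v4], ?_⟩, ?_⟩
    · intro a b hab
      rw [theta5, fromEdgeSet_adj] at hab
      obtain ⟨hm, -⟩ := hab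
      simp only [Set.mem_insert_iff, Set.mem_singleton_iff, Sym2.eq_iff] at hm
      rcases hm with (⟨rfl,rfl⟩|⟨rfl,rfl⟩)|(⟨rfl,rfl⟩|⟨rfl,rfl⟩)|(⟨rfl,rfl⟩|⟨rfl,rfl⟩)|
        (⟨rfl,rfl⟩|⟨rfl,rfl⟩)|(⟨rfl,rfl⟩|⟨rfl,rfl⟩)|(⟨rfl,rfl⟩|⟨rfl,rfl⟩) <;>
        simp only [Matrix.cons_val_zero, Matrix.cons_val_one, Matrix.head_cons,
          Matrix.cons_val_two, Matrix.tail_cons, Matrix.cons_val_three,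
          Matrix.cons_val_four, Matrix.cons_val_succ] <;>
        first
          | exact h01 | exact h01.symm | exact h12' | exact h12'.symm
          | exact h23 | exact h23.symm | exact h34 | exact h34.symm
          | exact h04 | exact h04.symm | exact h02 | exact h02.symm
    · intro a b hab
      fin_cases a <;> fin_cases b <;>
        simp only [Matrix.cons_val_zero, Matrix.cons_val_one, Matrix.head_cons,
          Matrix.cons_val_two, Matrix.tail_cons, Matrix.cons_val_three,
          Matrix.cons_val_four, Matrix.cons_val_succ, Fin.mk_zero, Fin.mk_one] at hab ⊢ <;>
        first | rfl | (exact absurd hab (by assumption)) | (exact absurd hab.symm (by assumption))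
  -- reduce to the normalized version
  rcases le_total (min x1 y1) (min x2 y2) with h | h
  · refine main (min x1 y1) (max x1 y1) (min x2 y2) (max x2 y2) (min_le_max) (min_le_max) h ?_
    intro a b hne hadj
    rw [sym2_minmax, sym2_minmax]; exact hcov a b hne hadj
  · refine main (min x2 y2) (max x2 y2) (min x1 y1) (max x1 y1) (min_le_max) (min_le_max) h ?_
    intro a b hne hadj
    rw [sym2_minmax, sym2_minmax]; exact (hcov a b hne hadj).symm

/-- Every planar simple graph on 5 vertices containing no copy of the Theta graph on
5 vertices has at most 7 edges. -/
theorem theta5_free_five_vertices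
    (V : Type*) [Fintype V] (G : SimpleGraph V) (hcard : Fintype.card V = 5)
    (hplanar : G.HasPlanarEmbedding) (hfree : ¬ ContainsCopy theta5 G) :
    G.edgeSet.ncard ≤ 7 := by
  classical
  by_contra hle
  push_neg at hle
  have h8 : 8 ≤ G.edgeSet.ncard := hle
  obtain ⟨e⟩ : Nonempty (V ≃ Fin 5) := ⟨Fintype.equivFinOfCardEq hcard⟩
  set G' : SimpleGraph (Fin 5) := G.comap e.symm with hG'
  -- transfer no-copy
  have hfree' : ¬ ContainsCopy theta5 G' := by
    rintro ⟨f, hf⟩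
    exact hfree ⟨(SimpleGraph.Hom.comap (⇑e.symm) G).comp f,
      (e.symm.injective.comp hf)⟩
  -- edge count of G'
  have hiso : G' ≃g G := SimpleGraph.Iso.comap e.symm G
  have hcount : G'.edgeFinset.card = G.edgeSet.ncard := by
    rw [hiso.card_edgeFinset_eq, Set.ncard_eq_toFinset_card']
    exact congrArg Finset.card (by ext; simp)
  -- complement has at most 2 edges
  have htop : ((⊤ : SimpleGraph (Fin 5)).edgeFinset).card = 10 := by
    rw [card_edgeFinset_top_eq_card_choose_two]; decide
  have hsubc : G'ᶜ.edgeFinset ⊆ (⊤ : SimpleGraph (Fin 5)).edgeFinset \ G'.edgeFinset := by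
    intro z hz
    induction z using Sym2.ind with
    | _ a b =>
      simp only [mem_edgeFinset, mem_edgeSet, compl_adj, Finset.mem_sdiff, top_adj] at hz ⊢
      tauto
  have hsubt : G'.edgeFinset ⊆ (⊤ : SimpleGraph (Fin 5)).edgeFinset := by
    intro z hz
    induction z using Sym2.ind with
    | _ a b =>
      simp only [mem_edgeFinset, mem_edgeSet, top_adj] at hz ⊢
      exact hz.ne
  have hc2 : G'ᶜ.edgeFinset.card ≤ 2 := by
    have := Finset.card_le_card hsubc
    rw [Finset.card_sdiff_of_subset hsubt, htop] at this
    omega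
  -- extract the at most two non-edges
  have hcover : ∃ e1 e2 : Sym2 (Fin 5), ∀ z ∈ G'ᶜ.edgeFinset, z = e1 ∨ z = e2 := by
    set s := G'ᶜ.edgeFinset with hs
    obtain h0 | h1 | h2 : s.card = 0 ∨ s.card = 1 ∨ s.card = 2 := by omega
    · refine ⟨s(0,0), s(0,0), fun z hz => ?_⟩
      rw [Finset.card_eq_zero] at h0; simp [h0] at hz
    · obtain ⟨a, ha⟩ := Finset.card_eq_one.mp h1
      exact ⟨a, a, fun z hz => by rw [ha] at hz; simp at hz; tauto⟩
    · obtain ⟨a, b, -, hab⟩ := Finset.card_eq_two.mp h2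
      exact ⟨a, b, fun z hz => by rw [hab] at hz; simp at hz; tauto⟩
  obtain ⟨e1, e2, hcov⟩ := hcover
  induction e1 using Sym2.ind with
  | _ x1 y1 =>
  induction e2 using Sym2.ind with
  | _ x2 y2 =>
  refine hfree' (contains_of_two_nonedges G' x1 y1 x2 y2 ?_)
  intro a b hne hadj
  exact hcov s(a,b) (by simp [mem_edgeFinset, mem_edgeSet, compl_adj, hne, hadj])
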